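/- arXiv:2104.13481 — 2 statements merged into one kernel-verified Lean document; each statement's English description precedes it below -/
import Mathlib

section
/- Let c ∈ Z³_≤(T¹, A¹) be an order-preserving 3-cocycle. Then c is normalized if and only if c(t, e, e) = θ(t e t⁻¹) and c(e, e, t) = θ(e t t⁻¹) for all t ∈ T and e ∈ E(T). -/
/-- An inverse semigroup: every element `s` has a (unique) inverse `s⁻¹`
with `s * s⁻¹ * s = s` and `s⁻¹ * s * s⁻¹ = s⁻¹`. -/
class InverseSemigroup (S : Type*) extends Semigroup S, Inv S where
  mul_inv_mul : ∀ s : S, s * s⁻¹ * s = s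
  inv_mul_inv : ∀ s : S, s⁻¹ * s * s⁻¹ = s⁻¹
  inv_unique : ∀ s t : S, s * t * s = s → t * s * t = t → t = s⁻¹

namespace InverseSemigroup

/-- The set of idempotents of a multiplicative structure. -/
def E (S : Type*) [Mul S] : Set S := {e | e * e = e}

/-- The natural partial order: `s ≤ t` iff `s = s * s⁻¹ * t`. -/
def nle {S : Type*} [Mul S] [Inv S] (s t : S) : Prop := s = s * s⁻¹ * t

/-- `r s = s * s⁻¹`. -/
def r {S : Type*} [Mul S] [Inv S] (s : S) : S := s * s⁻¹

/-- A Clifford semigroup (semilattice of groups): idempotents are central. -/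
def IsClifford (S : Type*) [Mul S] : Prop := ∀ e ∈ E S, ∀ s : S, e * s = s * e

end InverseSemigroup

namespace InverseSemigroup

variable {S : Type*} [InverseSemigroup S]

lemma inv_inv' (s : S) : s⁻¹⁻¹ = s :=
  (inv_unique s⁻¹ s (inv_mul_inv s) (mul_inv_mul s)).symm

lemma inv_idem {e : S} (he : e * e = e) : e⁻¹ = e :=
  (inv_unique e e (by rw [he, he]) (by rw [he, he])).symm

lemma r_idem (s : S) : (s * s⁻¹) * (s * s⁻¹) = s * s⁻¹ := by
  rw [← mul_assoc, mul_inv_mul]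

lemma d_idem (s : S) : (s⁻¹ * s) * (s⁻¹ * s) = s⁻¹ * s := by
  rw [← mul_assoc, inv_mul_inv]

private lemma idem_half {e f : S} (he : e * e = e) (hf : f * f = f) :
    (e * f) * (e * f) = e * f := by
  obtain ⟨a, ha⟩ : ∃ a, a = (e * f)⁻¹ := ⟨_, rfl⟩
  subst ha
  set a := (e * f)⁻¹ with ha
  have key1 : a * (e * f) * a = a := inv_mul_inv _
  have key2 : (e * f) * a * (e * f) = e * f := mul_inv_mul _
  have h1 : f * a * e = a := by
    refine inv_unique (e * f) (f * a * e) ?_ ?_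
    · calc e * f * (f * a * e) * (e * f)
          = e * ((f * f) * (a * ((e * e) * f))) := by simp only [mul_assoc]
        _ = e * (f * (a * (e * f))) := by rw [he, hf]
        _ = e * f := by simpa only [mul_assoc] using key2
    · calc f * a * e * (e * f) * (f * a * e)
          = f * (a * ((e * e) * ((f * f) * (a * e)))) := by simp only [mul_assoc]
        _ = f * (a * (e * (f * (a * e)))) := by rw [he, hf]
        _ = f * a * e := by simpa only [mul_assoc] using congrArg (fun z => f * (z * e)) key1
  have h2 : a * a = a := by
    conv_lhs => rw [← h1]
    calc f * a * e * (f * a * e) = f * (a * (e * (f * (a * e)))) := by simp only [mul_assoc]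
      _ = f * a * e := by simpa only [mul_assoc] using congrArg (fun z => f * (z * e)) key1
      _ = a := h1
  have h3 : e * f = a :=
    calc e * f = ((e * f)⁻¹)⁻¹ := (inv_inv' _).symm
      _ = a := inv_idem h2
  rw [h3, h2]

lemma idem_comm {e f : S} (he : e * e = e) (hf : f * f = f) : e * f = f * e := by
  have hef := idem_half he hf
  have hfe := idem_half hf he
  have h4 : f * e = (e * f)⁻¹ := by
    refine inv_unique (e * f) (f * e) ?_ ?_
    · calc e * f * (f * e) * (e * f) = e * ((f * f) * ((e * e) * f)) := by
            simp only [mul_assoc]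
        _ = e * (f * (e * f)) := by rw [he, hf]
        _ = e * f := by simpa only [mul_assoc] using hef
    · calc f * e * (e * f) * (f * e) = f * ((e * e) * ((f * f) * e)) := by
            simp only [mul_assoc]
        _ = f * (e * (f * e)) := by rw [he, hf]
        _ = f * e := by simpa only [mul_assoc] using hfe
  rw [h4, inv_idem hef]

lemma mul_inv_rev' (s t : S) : (s * t)⁻¹ = t⁻¹ * s⁻¹ := by
  have hcomm : (t * t⁻¹) * (s⁻¹ * s) = (s⁻¹ * s) * (t * t⁻¹) :=
    idem_comm (r_idem t) (d_idem s)
  refine (inv_unique (s * t) (t⁻¹ * s⁻¹) ?_ ?_).symm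
  · calc s * t * (t⁻¹ * s⁻¹) * (s * t)
        = s * ((t * t⁻¹) * (s⁻¹ * s)) * t := by simp only [mul_assoc]
      _ = s * ((s⁻¹ * s) * (t * t⁻¹)) * t := by rw [hcomm]
      _ = (s * s⁻¹ * s) * (t * t⁻¹ * t) := by simp only [mul_assoc]
      _ = s * t := by rw [mul_inv_mul, mul_inv_mul]
  · calc t⁻¹ * s⁻¹ * (s * t) * (t⁻¹ * s⁻¹)
        = t⁻¹ * ((s⁻¹ * s) * (t * t⁻¹)) * s⁻¹ := by simp only [mul_assoc]
      _ = t⁻¹ * ((t * t⁻¹) * (s⁻¹ * s)) * s⁻¹ := by rw [hcomm]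
      _ = (t⁻¹ * t * t⁻¹) * (s⁻¹ * s * s⁻¹) := by simp only [mul_assoc]
      _ = t⁻¹ * s⁻¹ := by rw [inv_mul_inv, inv_mul_inv]

lemma r_def (s : S) : r s = s * s⁻¹ := rfl

lemma r_idem_left {e : S} (he : e * e = e) (t : S) : r (e * t) = e * (t * t⁻¹) := by
  have hcomm : e * (t * t⁻¹) = (t * t⁻¹) * e := idem_comm he (r_idem t)
  calc r (e * t) = e * (t * (t⁻¹ * e)) := by
        rw [r_def, mul_inv_rev', inv_idem he]; simp only [mul_assoc]
    _ = e * (e * (t * t⁻¹)) := by rw [← mul_assoc t, ← hcomm]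
    _ = e * (t * t⁻¹) := by rw [← mul_assoc, he]

lemma r_idem_right {e : S} (he : e * e = e) (t : S) : r (t * e) = t * e * t⁻¹ := by
  calc r (t * e) = t * (e * e) * t⁻¹ := by
        rw [r_def, mul_inv_rev', inv_idem he]; simp only [mul_assoc]
    _ = t * e * t⁻¹ := by rw [he]

lemma r_absorb (s t : S) : r s * r (s * t) = r (s * t) := by
  calc r s * r (s * t) = (s * s⁻¹ * s) * (t * (s * t)⁻¹) := by
        rw [r_def, r_def]; simp only [mul_assoc]
    _ = r (s * t) := by rw [mul_inv_mul, r_def, mul_assoc]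

lemma nle_refl (s : S) : nle s s := (mul_inv_mul s).symm

lemma nle_idem_left {e : S} (he : e * e = e) (x : S) : nle (e * x) x := by
  have hcomm : e * (x * x⁻¹) = (x * x⁻¹) * e := idem_comm he (r_idem x)
  show e * x = e * x * (e * x)⁻¹ * x
  calc e * x = (e * e) * (x * x⁻¹ * x) := by rw [he, mul_inv_mul]
    _ = e * (e * (x * x⁻¹)) * x := by simp only [mul_assoc]
    _ = e * (x * (x⁻¹ * e)) * x := by rw [← mul_assoc x x⁻¹ e, ← hcomm]
    _ = e * x * (e * x)⁻¹ * x := by rw [mul_inv_rev', inv_idem he]; simp only [mul_assoc]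

lemma nle_idem_right {e : S} (he : e * e = e) (x : S) : nle (x * e) x := by
  have hcomm : e * (x⁻¹ * x) = (x⁻¹ * x) * e := idem_comm he (d_idem x)
  show x * e = x * e * (x * e)⁻¹ * x
  calc x * e = x * (x⁻¹ * x) * e := by rw [← mul_assoc x x⁻¹ x, mul_inv_mul]
    _ = x * (e * (x⁻¹ * x)) := by rw [hcomm, mul_assoc]
    _ = x * ((e * e) * (x⁻¹ * x)) := by rw [he]
    _ = x * e * (x * e)⁻¹ * x := by rw [mul_inv_rev', inv_idem he]; simp only [mul_assoc]

lemma eq_of_nle_of_r {a b : S} (h : nle a b) (hr : a * a⁻¹ = b * b⁻¹) : a = b := by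
  rw [nle] at h
  rw [h, hr, mul_inv_mul]

end InverseSemigroup

open InverseSemigroup

/-- An order-preserving 3-cocycle is normalized iff `c(t,e,e) = θ(t e t⁻¹)` and
`c(e,e,t) = θ(e t t⁻¹)` for all `t` and idempotents `e`. -/
theorem normalized_iff_two_conditions {T A : Type*} [InverseSemigroup T] [InverseSemigroup A]
    (θ : T → A) (η : T → A → A)
    (hAcomm : ∀ a b : A, a * b = b * a)
    (hθE : ∀ e ∈ E T, θ e ∈ E A)
    (hθinj : ∀ e ∈ E T, ∀ f ∈ E T, θ e = θ f → e = f)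
    (hθsurj : ∀ a ∈ E A, ∃ e ∈ E T, θ e = a)
    (hθmul : ∀ e ∈ E T, ∀ f ∈ E T, θ (e * f) = θ e * θ f)
    (hηhom : ∀ t u : T, ∀ a : A, η (t * u) a = η t (η u a))
    (hηmul : ∀ t : T, ∀ a b : A, η t (a * b) = η t a * η t b)
    (hη1 : ∀ e ∈ E T, ∀ a : A, η e a = θ e * a)
    (hη2 : ∀ t : T, ∀ e ∈ E T, η t (θ e) = θ (t * e * t⁻¹))
    (c : T → T → T → A)
    (hc : ∀ x y z : T, c x y z * (c x y z)⁻¹ = θ (r (x * y * z)))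
    (hcoc : ∀ x y z w : T,
      η x (c y z w) * c x y z * c x (y * z) w = c x y (z * w) * c (x * y) z w)
    (hop : ∀ x x' y y' z z' : T, nle x x' → nle y y' → nle z z' →
      nle (c x y z) (c x' y' z'))
    : (∀ x y : T, ∀ e ∈ E T,
        c e (e * x) y = θ (r (e * x * y)) ∧
        c (x * e) e (e * y) = θ (r (x * e * y)) ∧
        c x (y * e) e = θ (r (x * y * e))) ↔
      (∀ t : T, ∀ e ∈ E T,
        c t e e = θ (t * e * t⁻¹) ∧ c e e t = θ (e * (t * t⁻¹))) := by
  have habs : ∀ x y z : T, θ (r (x * y * z)) * c x y z = c x y z := by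
    intro x y z
    rw [← hc x y z]
    exact InverseSemigroup.mul_inv_mul _
  have rr : ∀ w : T, r w * r w = r w := by
    intro w; rw [r_def]; exact r_idem w
  have hcidem : ∀ x y z : T, c x y z * c x y z = c x y z → c x y z = θ (r (x * y * z)) := by
    intro x y z h
    rw [← hc x y z, inv_idem h, h]
  have habsθ : ∀ u x y z : T, u * r (x * y * z) = r (x * y * z) → u * u = u →
      θ u * c x y z = c x y z := by
    intro u x y z h hu
    rw [← habs x y z, ← mul_assoc, ← hθmul u hu (r (x * y * z)) (rr _), h]
  have hceq : ∀ x x' y y' z z' : T, nle x x' → nle y y' → nle z z' →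
      x * y * z = x' * y' * z' → c x y z = c x' y' z' := by
    intro x x' y y' z z' h1 h2 h3 h4
    refine eq_of_nle_of_r (hop _ _ _ _ _ _ h1 h2 h3) ?_
    rw [hc, hc, h4]
  constructor
  · intro hN t e he
    have he' : e * e = e := he
    constructor
    · have h := (hN t e e he).2.2
      rw [he', mul_assoc t e e, he'] at h
      rw [h, r_idem_right he' t]
    · have h := (hN e t e he).1
      rw [he'] at h
      rw [h, r_idem_left he' t]
  · intro hR
    have key1 : ∀ x y e : T, e * e = e → c e x y = θ (r (e * x * y)) := by
      intro x y e he
      have hee' : ∀ z : T, e * (e * z) = e * z := fun z => by rw [← mul_assoc, he]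
      have h1 : c e e x = θ (e * (x * x⁻¹)) := (hR x e he).2
      have h2 : c e e (x * y) = θ (e * ((x * y) * (x * y)⁻¹)) := (hR (x * y) e he).2
      have hmid : c e (e * x) y = c e x y :=
        hceq e e (e * x) x y y (nle_refl e) (nle_idem_left he x) (nle_refl y)
          (by simp only [mul_assoc, hee'])
      have heq := hcoc e e x y
      rw [hη1 e he (c e x y), h1, h2, hmid, he] at heq
      have a1 : θ e * c e x y = c e x y := by
        refine habsθ e e x y ?_ he
        rw [r_def]; simp only [mul_assoc, hee']
      rw [a1] at heq
      have h6 : e * (x * x⁻¹) = r (e * x) := (r_idem_left he x).symm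
      rw [h6, hAcomm (c e x y) (θ (r (e * x)))] at heq
      have a2 : θ (r (e * x)) * c e x y = c e x y :=
        habsθ (r (e * x)) e x y (r_absorb (e * x) y) (rr (e * x))
      rw [a2] at heq
      have h7 : e * ((x * y) * (x * y)⁻¹) = r (e * x * y) := by
        rw [← r_idem_left he (x * y), ← mul_assoc]
      rw [h7, habs e x y] at heq
      exact hcidem e x y heq
    have key2 : ∀ x y e : T, e * e = e → c x e y = θ (r (x * e * y)) := by
      intro x y e he
      have hee' : ∀ z : T, e * (e * z) = e * z := fun z => by rw [← mul_assoc, he]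
      have hcomm : e * (y * y⁻¹) = (y * y⁻¹) * e := idem_comm he (r_idem y)
      have hsand : e * (y * y⁻¹) * e = e * (y * y⁻¹) := by
        rw [mul_assoc, ← hcomm, ← mul_assoc, he]
      have hidem1 : (e * (y * y⁻¹)) * (e * (y * y⁻¹)) = e * (y * y⁻¹) := by
        rw [← r_idem_left he y, r_def]; exact r_idem _
      have h1 : c e e y = θ (e * (y * y⁻¹)) := (hR y e he).2
      have h2 : η x (θ (e * (y * y⁻¹))) = θ (x * (e * (y * y⁻¹)) * x⁻¹) := hη2 x _ hidem1
      have h3 : x * (e * (y * y⁻¹)) * x⁻¹ = r (x * e * y) := by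
        have hr : r (x * e * y) = x * (e * (y * y⁻¹) * e) * x⁻¹ := by
          rw [r_def, mul_inv_rev', mul_inv_rev', inv_idem he]; simp only [mul_assoc]
        rw [hr, hsand]
      have h4 : c x e e = θ (x * e * x⁻¹) := (hR x e he).1
      have h5 : x * e * x⁻¹ = r (x * e) := (r_idem_right he x).symm
      have hR1 : c x e (e * y) = c x e y :=
        hceq x x e e (e * y) y (nle_refl x) (nle_refl e) (nle_idem_left he y)
          (by simp only [mul_assoc, hee'])
      have hR2 : c (x * e) e y = c x e y :=
        hceq (x * e) x e e y y (nle_idem_right he x) (nle_refl e) (nle_refl y)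
          (by simp only [mul_assoc, hee'])
      have heq := hcoc x e e y
      rw [h1, h2, h3, h4, h5, he, hR1, hR2] at heq
      have hL : θ (r (x * e * y)) * θ (r (x * e)) * c x e y = c x e y := by
        rw [hAcomm (θ (r (x * e * y))) (θ (r (x * e))),
          ← hθmul (r (x * e)) (rr _) (r (x * e * y)) (rr _), r_absorb (x * e) y]
        exact habs x e y
      rw [hL] at heq
      exact hcidem x e y heq.symm
    have key3 : ∀ x y e : T, e * e = e → c x y e = θ (r (x * y * e)) := by
      intro x y e he
      have hee' : ∀ z : T, e * (e * z) = e * z := fun z => by rw [← mul_assoc, he]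
      have h1 : c y e e = θ (y * e * y⁻¹) := (hR y e he).1
      have hidem1 : (y * e * y⁻¹) * (y * e * y⁻¹) = y * e * y⁻¹ := by
        rw [← r_idem_right he y, r_def]; exact r_idem (y * e)
      have h2 : η x (θ (y * e * y⁻¹)) = θ (x * (y * e * y⁻¹) * x⁻¹) := hη2 x _ hidem1
      have h3 : x * (y * e * y⁻¹) * x⁻¹ = r (x * y * e) := by
        rw [r_def, mul_inv_rev', mul_inv_rev', inv_idem he]; simp only [mul_assoc, hee']
      have hmid : c x (y * e) e = c x y e :=
        hceq x x (y * e) y e e (nle_refl x) (nle_idem_right he y) (nle_refl e)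
          (by simp only [mul_assoc, he])
      have h4 : c (x * y) e e = θ ((x * y) * e * (x * y)⁻¹) := (hR (x * y) e he).1
      have h5 : (x * y) * e * (x * y)⁻¹ = r (x * y * e) := (r_idem_right he (x * y)).symm
      have heq := hcoc x y e e
      rw [h1, h2, h3, hmid, h4, h5, he] at heq
      rw [habs x y e, hAcomm (c x y e) (θ (r (x * y * e))), habs x y e] at heq
      exact hcidem x y e heq
    intro x y e he
    have he' : e * e = e := he
    have hee' : ∀ z : T, e * (e * z) = e * z := fun z => by rw [← mul_assoc, he']
    refine ⟨?_, ?_, ?_⟩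
    · rw [key1 (e * x) y e he']
      have h : e * (e * x) = e * x := by rw [← mul_assoc, he']
      rw [h]
    · rw [key2 (x * e) (e * y) e he']
      have h : (x * e) * e * (e * y) = x * e * y := by simp only [mul_assoc, hee']
      rw [h]
    · rw [key3 x (y * e) e he']
      have h : x * (y * e) * e = x * y * e := by simp only [mul_assoc, he']
      rw [h]
end

section
/- Let c ∈ Z³_≤(T¹, A¹) be an order-preserving 3-cocycle and define d(x,y) = c(x x⁻¹, x, y)⁻¹ · c(x, y, y⁻¹ y). Then d is an order-preserving 2-cochain, and the cohomologous cocycle c · δ²d is normalized. Consequently, every order-preserving 3-cocycle is cohomologous in Z³_≤ to a normalized order-preserving 3-cocycle. -/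
open InverseSemigroup

section Prelim
variable {S : Type*} [InverseSemigroup S]

open InverseSemigroup (mul_inv_mul inv_mul_inv inv_unique)

lemma is_inv_inv (s : S) : s⁻¹⁻¹ = s :=
  ((inv_unique s⁻¹ s (inv_mul_inv s) (mul_inv_mul s))).symm

lemma is_idem_inv {e : S} (he : e * e = e) : e⁻¹ = e :=
  (inv_unique e e (by rw [he, he]) (by rw [he, he])).symm

lemma is_r_idem (s : S) : (s * s⁻¹) * (s * s⁻¹) = s * s⁻¹ := by
  calc (s * s⁻¹) * (s * s⁻¹) = (s * s⁻¹ * s) * s⁻¹ := by simp only [mul_assoc]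
  _ = s * s⁻¹ := by rw [mul_inv_mul]

lemma is_l_idem (s : S) : (s⁻¹ * s) * (s⁻¹ * s) = s⁻¹ * s := by
  calc (s⁻¹ * s) * (s⁻¹ * s) = (s⁻¹ * s * s⁻¹) * s := by simp only [mul_assoc]
  _ = s⁻¹ * s := by rw [inv_mul_inv]

lemma is_idem_comm {e f : S} (he : e * e = e) (hf : f * f = f) : e * f = f * e := by
  -- step 1 : f * (e*f)⁻¹ * e is an inverse of e * f, hence equals (e*f)⁻¹
  have h1 : ∀ g h : S, g * g = g → h * h = h →
      (g * h) * (h * (g*h)⁻¹ * g) * (g * h) = g * h := by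
    intro g h hg hh
    have : (g * h) * (h * (g*h)⁻¹ * g) * (g * h)
        = g * ((h * h) * ((g*h)⁻¹ * ((g * g) * h))) := by simp only [mul_assoc]
    rw [this, hh, hg, show h * ((g*h)⁻¹ * (g * h)) = (h * (g*h)⁻¹) * (g*h) by
      simp only [mul_assoc]]
    have : g * (h * (g * h)⁻¹ * (g * h)) = (g * h) * (g*h)⁻¹ * (g * h) := by
      simp only [mul_assoc]
    rw [this, mul_inv_mul]
  have h2 : ∀ g h : S, g * g = g → h * h = h →
      (h * (g*h)⁻¹ * g) * (g * h) * (h * (g*h)⁻¹ * g) = h * (g*h)⁻¹ * g := by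
    intro g h hg hh
    have : (h * (g*h)⁻¹ * g) * (g * h) * (h * (g*h)⁻¹ * g)
        = h * ((g*h)⁻¹ * ((g * g) * ((h * h) * ((g*h)⁻¹ * g)))) := by
      simp only [mul_assoc]
    rw [this, hg, hh]
    have : (g*h)⁻¹ * (g * (h * ((g*h)⁻¹ * g))) = ((g*h)⁻¹ * (g * h) * (g*h)⁻¹) * g := by
      simp only [mul_assoc]
    rw [this, inv_mul_inv]
    simp only [mul_assoc]
  have hkey : ∀ g h : S, g * g = g → h * h = h → (g * h) * (g * h) = g * h := by
    intro g h hg hh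
    have ha : h * (g*h)⁻¹ * g = (g*h)⁻¹ :=
      inv_unique (g*h) _ (h1 g h hg hh) (h2 g h hg hh)
    -- (g*h)⁻¹ is idempotent
    have hidem : (g*h)⁻¹ * (g*h)⁻¹ = (g*h)⁻¹ := by
      conv_lhs => rw [← ha]
      have : (h * (g*h)⁻¹ * g) * (h * (g*h)⁻¹ * g)
          = h * ((g*h)⁻¹ * (g * h) * ((g*h)⁻¹ * g)) := by simp only [mul_assoc]
      rw [this, show (g*h)⁻¹ * (g * h) * ((g*h)⁻¹ * g) = ((g*h)⁻¹ * (g*h) * (g*h)⁻¹) * g by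
        simp only [mul_assoc], inv_mul_inv]
      rw [← mul_assoc, ha]
    -- hence g*h = ((g*h)⁻¹)⁻¹ = (g*h)⁻¹ is idempotent
    have hgh : g * h = (g*h)⁻¹ := by
      conv_lhs => rw [← is_inv_inv (g*h)]
      rw [is_idem_inv hidem]
    rw [hgh]; exact hidem
  -- now e*f and f*e are both idempotent and mutually inverse
  have hef := hkey e f he hf
  have hfe := hkey f e hf he
  have h3 : (e * f) * (f * e) * (e * f) = e * f := by
    have : (e * f) * (f * e) * (e * f) = e * ((f * f) * ((e * e) * f)) := by
      simp only [mul_assoc]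
    rw [this, hf, he, ← mul_assoc, hef]
  have h4 : (f * e) * (e * f) * (f * e) = f * e := by
    have : (f * e) * (e * f) * (f * e) = f * ((e * e) * ((f * f) * e)) := by
      simp only [mul_assoc]
    rw [this, he, hf, ← mul_assoc, hfe]
  have : f * e = (e * f)⁻¹ := inv_unique (e*f) (f*e) h3 h4
  rw [this, is_idem_inv hef]

lemma is_idem_mul {e f : S} (he : e * e = e) (hf : f * f = f) : (e * f) * (e * f) = e * f := by
  have : (e * f) * (e * f) = e * ((f * e) * f) := by simp only [mul_assoc]
  rw [this, ← is_idem_comm he hf]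
  have : e * (e * f * f) = (e * e) * (f * f) := by simp only [mul_assoc]
  rw [this, he, hf]

lemma is_mul_inv_rev (s t : S) : (s * t)⁻¹ = t⁻¹ * s⁻¹ := by
  refine (inv_unique (s*t) (t⁻¹ * s⁻¹) ?_ ?_).symm
  · have : (s * t) * (t⁻¹ * s⁻¹) * (s * t) = s * ((t * t⁻¹) * (s⁻¹ * s) * t) := by
      simp only [mul_assoc]
    rw [this, is_idem_comm (is_r_idem t) (is_l_idem s)]
    have : s * (s⁻¹ * s * (t * t⁻¹) * t) = (s * s⁻¹ * s) * (t * t⁻¹ * t) := by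
      simp only [mul_assoc]
    rw [this, mul_inv_mul, mul_inv_mul]
  · have : (t⁻¹ * s⁻¹) * (s * t) * (t⁻¹ * s⁻¹) = t⁻¹ * ((s⁻¹ * s) * (t * t⁻¹) * s⁻¹) := by
      simp only [mul_assoc]
    rw [this, is_idem_comm (is_l_idem s) (is_r_idem t)]
    have : t⁻¹ * (t * t⁻¹ * (s⁻¹ * s) * s⁻¹) = (t⁻¹ * t * t⁻¹) * (s⁻¹ * s * s⁻¹) := by
      simp only [mul_assoc]
    rw [this, inv_mul_inv, inv_mul_inv]

lemma is_nle_refl (s : S) : nle s s := (mul_inv_mul s).symm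

lemma is_nle_left {e s t : S} (he : e * e = e) (h : s = e * t) : nle s t := by
  unfold nle
  have hss : s * s⁻¹ = e * (t * t⁻¹) := by
    rw [h, is_mul_inv_rev, is_idem_inv he]
    have : e * t * (t⁻¹ * e) = e * (t * t⁻¹) * e := by simp only [mul_assoc]
    rw [this, mul_assoc, is_idem_comm (is_r_idem t) he, ← mul_assoc, he]
  rw [hss, mul_assoc, mul_inv_mul]; exact h

lemma is_nle_right {e s t : S} (he : e * e = e) (h : s = t * e) : nle s t := by
  unfold nle
  have hss : s * s⁻¹ = t * e * t⁻¹ := by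
    rw [h, is_mul_inv_rev, is_idem_inv he]
    have : t * e * (e * t⁻¹) = t * (e * e) * t⁻¹ := by simp only [mul_assoc]
    rw [this, he]
  rw [hss, mul_assoc, mul_assoc, is_idem_comm he (is_l_idem t), ← mul_assoc,
    ← mul_assoc, mul_inv_mul]
  exact h

lemma is_nle_to_right {s t : S} (h : nle s t) : s = t * (s⁻¹ * s) := by
  have he := is_r_idem s
  have hsinv : s⁻¹ = t⁻¹ * (s * s⁻¹) := by
    conv_lhs => rw [h]
    rw [is_mul_inv_rev, is_idem_inv he]
  calc s = (s*s⁻¹) * (t * t⁻¹ * t) := by rw [mul_inv_mul]; exact h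
  _ = (s*s⁻¹) * (t*t⁻¹) * t := by simp only [mul_assoc]
  _ = (t*t⁻¹) * (s*s⁻¹) * t := by rw [is_idem_comm he (is_r_idem t)]
  _ = t * (t⁻¹ * (s * s⁻¹ * t)) := by simp only [mul_assoc]
  _ = t * (t⁻¹ * s) := by rw [← h]
  _ = t * (s⁻¹ * s) := by rw [hsinv, mul_assoc, mul_inv_mul]

lemma is_nle_trans {s t u : S} (h1 : nle s t) (h2 : nle t u) : nle s u := by
  have h3 : s = s * s⁻¹ * (t * t⁻¹ * u) := by rw [← h2]; exact h1
  have h4 : s = ((s*s⁻¹) * (t*t⁻¹)) * u := by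
    simp only [mul_assoc] at h3 ⊢; exact h3
  exact is_nle_left (is_idem_mul (is_r_idem s) (is_r_idem t)) h4

lemma is_nle_mul {s t u v : S} (h1 : nle s t) (h2 : nle u v) : nle (s*u) (t*v) := by
  have h2' := is_nle_to_right h2
  have key : s * u = (s*s⁻¹) * ((t * v) * (u⁻¹*u)) := by
    conv_lhs => rw [h1, h2']
    simp only [mul_assoc]
  have n1 : nle (s*u) ((t*v)*(u⁻¹*u)) := is_nle_left (is_r_idem s) key
  have n2 : nle ((t*v)*(u⁻¹*u)) (t*v) := is_nle_right (is_l_idem u) rfl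
  exact is_nle_trans n1 n2

lemma is_nle_inv {s t : S} (h : nle s t) : nle s⁻¹ t⁻¹ := by
  have hsinv : s⁻¹ = t⁻¹ * (s * s⁻¹) := by
    conv_lhs => rw [h]
    rw [is_mul_inv_rev, is_idem_inv (is_r_idem s)]
  exact is_nle_right (is_r_idem s) hsinv

lemma is_r_absorb (s t : S) : r (s*t) * r s = r (s*t) := by
  show ((s*t)*(s*t)⁻¹)*(s*s⁻¹) = (s*t)*(s*t)⁻¹
  rw [is_mul_inv_rev]
  have h1 : s*t*(t⁻¹*s⁻¹)*(s*s⁻¹) = s*((t*t⁻¹)*(s⁻¹*s)*s⁻¹) := by simp only [mul_assoc]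
  rw [h1, is_idem_comm (is_r_idem t) (is_l_idem s)]
  have h2 : s*((s⁻¹*s)*(t*t⁻¹)*s⁻¹) = (s*s⁻¹*s)*((t*t⁻¹)*s⁻¹) := by simp only [mul_assoc]
  rw [h2, mul_inv_mul]
  simp only [mul_assoc]

lemma is_r_conj (x s : S) : x * r s * x⁻¹ = r (x*s) := by
  show x*(s*s⁻¹)*x⁻¹ = (x*s)*(x*s)⁻¹
  rw [is_mul_inv_rev]
  simp only [mul_assoc]

end Prelim

/-- With `d(x,y) = c(x x⁻¹, x, y)⁻¹ c(x, y, y⁻¹ y)`, `d` is an order-preserving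
2-cochain and `c · δ²d` is a normalized order-preserving 3-cocycle; hence every
order-preserving 3-cocycle is cohomologous in `Z³_≤` to a normalized one. -/
theorem cocycle_cohomologous_to_normalized {T A : Type*}
    [InverseSemigroup T] [InverseSemigroup A]
    (θ : T → A) (η : T → A → A)
    (hAcomm : ∀ a b : A, a * b = b * a)
    (hθE : ∀ e ∈ E T, θ e ∈ E A)
    (hθinj : ∀ e ∈ E T, ∀ f ∈ E T, θ e = θ f → e = f)
    (hθsurj : ∀ a ∈ E A, ∃ e ∈ E T, θ e = a)
    (hθmul : ∀ e ∈ E T, ∀ f ∈ E T, θ (e * f) = θ e * θ f)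
    (hηhom : ∀ t u : T, ∀ a : A, η (t * u) a = η t (η u a))
    (hηmul : ∀ t : T, ∀ a b : A, η t (a * b) = η t a * η t b)
    (hη1 : ∀ e ∈ E T, ∀ a : A, η e a = θ e * a)
    (hη2 : ∀ t : T, ∀ e ∈ E T, η t (θ e) = θ (t * e * t⁻¹))
    (c : T → T → T → A)
    (hc : ∀ x y z : T, c x y z * (c x y z)⁻¹ = θ (r (x * y * z)))
    (hcoc : ∀ x y z w : T,
      η x (c y z w) * c x y z * c x (y * z) w = c x y (z * w) * c (x * y) z w)
    (hop : ∀ x x' y y' z z' : T, nle x x' → nle y y' → nle z z' →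
      nle (c x y z) (c x' y' z'))
    : let d : T → T → A := fun x y => (c (x * x⁻¹) x y)⁻¹ * c x y (y⁻¹ * y)
      let c' : T → T → T → A := fun x y z =>
        c x y z * (η x (d y z) * (d (x * y) z)⁻¹ * d x (y * z) * (d x y)⁻¹)
      (∀ x y : T, d x y * (d x y)⁻¹ = θ (r (x * y))) ∧
      (∀ x x' y y' : T, nle x x' → nle y y' → nle (d x y) (d x' y')) ∧
      (∀ x y z : T, c' x y z * (c' x y z)⁻¹ = θ (r (x * y * z))) ∧
      (∀ x y z w : T,
        η x (c' y z w) * c' x y z * c' x (y * z) w = c' x y (z * w) * c' (x * y) z w) ∧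
      (∀ x x' y y' z z' : T, nle x x' → nle y y' → nle z z' →
        nle (c' x y z) (c' x' y' z')) ∧
      (∀ x y : T, ∀ e ∈ E T,
        c' e (e * x) y = θ (r (e * x * y)) ∧
        c' (x * e) e (e * y) = θ (r (x * e * y)) ∧
        c' x (y * e) e = θ (r (x * y * e))) := by
  intro d c'
  have hd : ∀ x y : T, d x y = (c (x * x⁻¹) x y)⁻¹ * c x y (y⁻¹ * y) := fun _ _ => rfl
  have hc'def : ∀ x y z : T, c' x y z =
      c x y z * (η x (d y z) * (d (x * y) z)⁻¹ * d x (y * z) * (d x y)⁻¹) :=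
    fun _ _ _ => rfl
  clear_value d c'
  haveI : Std.Commutative (α := A) (· * ·) := ⟨hAcomm⟩
  haveI : Std.Associative (α := A) (· * ·) := ⟨mul_assoc⟩
  -- A-side helpers
  have hAinv : ∀ a b : A, (a * b)⁻¹ = a⁻¹ * b⁻¹ := fun a b => by
    rw [is_mul_inv_rev]; exact hAcomm _ _
  have hsupp_mul : ∀ a b : A, (a * b) * (a * b)⁻¹ = (a * a⁻¹) * (b * b⁻¹) := fun a b => by
    rw [hAinv]; ac_rfl
  have hsupp_inv : ∀ a : A, a⁻¹ * a⁻¹⁻¹ = a * a⁻¹ := fun a => by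
    rw [is_inv_inv]; exact hAcomm _ _
  have habs : ∀ a u v : A, a * a⁻¹ = u → u * v = u → a * v = a := by
    intro a u v h1 h2
    have step : a * u = a := by
      calc a * u = a * (a * a⁻¹) := by rw [h1]
      _ = a * a⁻¹ * a := by ac_rfl
      _ = a := InverseSemigroup.mul_inv_mul a
    have e0 : a * ((a * a⁻¹) * v) = a * v := by
      calc a * ((a * a⁻¹) * v) = (a * a⁻¹ * a) * v := by ac_rfl
      _ = a * v := by rw [InverseSemigroup.mul_inv_mul]
    calc a * v = a * ((a * a⁻¹) * v) := e0.symm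
    _ = a * (u * v) := by rw [h1]
    _ = a * u := by rw [h2]
    _ = a := step
  -- T/θ-side helpers
  have hrE : ∀ s : T, r s ∈ E T := fun s => is_r_idem s
  have hθr_sq : ∀ s : T, θ (r s) * θ (r s) = θ (r s) := fun s => hθE _ (hrE s)
  have hθrr : ∀ s t : T, θ (r (s * t)) * θ (r s) = θ (r (s * t)) := fun s t => by
    rw [← hθmul _ (hrE (s * t)) _ (hrE s), is_r_absorb]
  have hηinv : ∀ (t : T) (a : A), η t a⁻¹ = (η t a)⁻¹ := by
    intro t a
    refine InverseSemigroup.inv_unique (η t a) (η t a⁻¹) ?_ ?_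
    · rw [← hηmul, ← hηmul, InverseSemigroup.mul_inv_mul]
    · rw [← hηmul, ← hηmul, InverseSemigroup.inv_mul_inv]
  have hsupη : ∀ (t : T) (a : A), η t a * (η t a)⁻¹ = η t (a * a⁻¹) := by
    intro t a; rw [← hηinv, ← hηmul]
  have hηθr : ∀ x s : T, η x (θ (r s)) = θ (r (x * s)) := fun x s => by
    rw [hη2 _ _ (hrE s), is_r_conj]
  -- (1) support of d
  have hsupd : ∀ x y : T, d x y * (d x y)⁻¹ = θ (r (x * y)) := by
    intro x y
    rw [hd, hsupp_mul, hsupp_inv, hc, hc]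
    have e1 : x * x⁻¹ * x * y = x * y := by rw [InverseSemigroup.mul_inv_mul]
    have e2 : x * y * (y⁻¹ * y) = x * y := by
      rw [mul_assoc, ← mul_assoc y, InverseSemigroup.mul_inv_mul]
    rw [e1, e2, hθr_sq]
  have hsηd : ∀ x s t : T, η x (d s t) * (η x (d s t))⁻¹ = θ (r (x * (s * t))) := by
    intro x s t; rw [hsupη, hsupd, hηθr]
  -- (2) d is order preserving
  have hdmono : ∀ x x' y y' : T, nle x x' → nle y y' → nle (d x y) (d x' y') := by
    intro x x' y y' hx hy
    rw [hd, hd]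
    exact is_nle_mul
      (is_nle_inv (hop _ _ _ _ _ _ (is_nle_mul hx (is_nle_inv hx)) hx hy))
      (hop _ _ _ _ _ _ hx hy (is_nle_mul (is_nle_inv hy) hy))
  -- (3) support of c'
  have hsupc' : ∀ x y z : T, c' x y z * (c' x y z)⁻¹ = θ (r (x * y * z)) := by
    intro x y z
    rw [hc'def]
    simp only [hsupp_mul, hsupp_inv]
    rw [hc, hsηd, hsupd, hsupd, hsupd]
    simp only [← mul_assoc]
    rw [hθr_sq, hθr_sq, hθr_sq, hθrr]
  -- (5) monotonicity helpers for η
  have hηle : ∀ (t : T) (a a' : A), nle a a' → nle (η t a) (η t a') := by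
    intro t a a' h
    show η t a = η t a * (η t a)⁻¹ * η t a'
    calc η t a = η t (a * a⁻¹ * a') := by rw [← h]
    _ = η t (a * a⁻¹) * η t a' := by rw [hηmul]
    _ = (η t a * (η t a)⁻¹) * η t a' := by rw [← hsupη]
  have hημono : ∀ (x x' : T) (a a' : A), nle x x' → nle a a' →
      nle (η x a) (η x' a') := by
    intro x x' a a' hx ha
    have h1 : η x a = θ (x * x⁻¹) * η x' a := by
      conv_lhs => rw [hx]
      rw [hηhom, hη1 _ (is_r_idem x)]
    have h2 : nle (η x a) (η x' a) := is_nle_left (hθE _ (hrE x)) h1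
    exact is_nle_trans h2 (hηle x' a a' ha)
  have hc'mono : ∀ x x' y y' z z' : T, nle x x' → nle y y' → nle z z' →
      nle (c' x y z) (c' x' y' z') := by
    intro x x' y y' z z' hx hy hz
    rw [hc'def, hc'def]
    refine is_nle_mul (hop _ _ _ _ _ _ hx hy hz) ?_
    exact is_nle_mul (is_nle_mul (is_nle_mul
      (hημono _ _ _ _ hx (hdmono _ _ _ _ hy hz))
      (is_nle_inv (hdmono _ _ _ _ (is_nle_mul hx hy) hz)))
      (hdmono _ _ _ _ hx (is_nle_mul hy hz)))
      (is_nle_inv (hdmono _ _ _ _ hx hy))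
  -- (4) cocycle identity for c'
  have hc'coc : ∀ x y z w : T,
      η x (c' y z w) * c' x y z * c' x (y * z) w
        = c' x y (z * w) * c' (x * y) z w := by
    have habsP : ∀ a m u v : A, a * a⁻¹ = u → u * v = u → v * (a * m) = a * m := by
      intro a m u v h1 h2
      calc v * (a * m) = (a * v) * m := by ac_rfl
      _ = a * m := by rw [habs a u v h1 h2]
    have hb : ∀ x y z w : T,
        η x (η y (d z w) * (d (y * z) w)⁻¹ * d y (z * w) * (d y z)⁻¹) *
          (η x (d y z) * (d (x * y) z)⁻¹ * d x (y * z) * (d x y)⁻¹) *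
          (η x (d (y * z) w) * (d (x * (y * z)) w)⁻¹ * d x ((y * z) * w) * (d x (y * z))⁻¹)
        = (η x (d y (z * w)) * (d (x * y) (z * w))⁻¹ * d x (y * (z * w)) * (d x y)⁻¹) *
          (η (x * y) (d z w) * (d ((x * y) * z) w)⁻¹ * d (x * y) (z * w) * (d (x * y) z)⁻¹) := by
      intro x y z w
      rw [hηmul, hηmul, hηmul, hηinv, hηinv, ← hηhom]
      have key1 := hsηd x (y * z) w
      have key2 := hsηd x y z
      have key3 := hsupd x (y * z)
      have key4 := hsupd x (y * (z * w))
      have key5 := hsupd (x * y) (z * w)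
      have key6 := hθrr (x * (y * z)) w
      simp only [mul_assoc] at key1 key5 key6 ⊢
      trans ((η x (d (y * z) w) * (η x (d (y * z) w))⁻¹) *
        ((η x (d y z) * (η x (d y z))⁻¹) *
        ((d x (y * z) * (d x (y * z))⁻¹) *
        (d x (y * (z * w)) *
          (η (x * y) (d z w) * (η x (d y (z * w)) * ((d (x * y) z)⁻¹ *
            ((d x y)⁻¹ * (d (x * (y * z)) w)⁻¹))))))))
      · ac_rfl
      rw [key1, key2, key3]
      symm
      trans ((d (x * y) (z * w) * (d (x * y) (z * w))⁻¹) *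
        (d x (y * (z * w)) *
          (η (x * y) (d z w) * (η x (d y (z * w)) * ((d (x * y) z)⁻¹ *
            ((d x y)⁻¹ * (d (x * (y * z)) w)⁻¹))))))
      · ac_rfl
      rw [key5, habsP _ _ _ _ key4 key6, habsP _ _ _ _ key4 key6]
    intro x y z w
    rw [hc'def, hc'def, hc'def, hc'def, hc'def, hηmul]
    trans ((η x (c y z w) * c x y z * c x (y * z) w) *
      (η x (η y (d z w) * (d (y * z) w)⁻¹ * d y (z * w) * (d y z)⁻¹) *
        (η x (d y z) * (d (x * y) z)⁻¹ * d x (y * z) * (d x y)⁻¹) *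
        (η x (d (y * z) w) * (d (x * (y * z)) w)⁻¹ * d x ((y * z) * w) * (d x (y * z))⁻¹)))
    · ac_rfl
    rw [hcoc, hb]
    ac_rfl
  -- (6) normalization
  have hθre : ∀ e s : T, e * e = e → e * s = s → θ (r s) * θ e = θ (r s) := by
    intro e s hee hes
    rw [← hθmul _ (hrE s) _ hee]
    have harg : r s * e = r s := by
      show s * s⁻¹ * e = s * s⁻¹
      rw [is_idem_comm (is_r_idem s) hee, ← mul_assoc, hes]
    rw [harg]
  have hPQ : ∀ P Q g : A, P * P⁻¹ = g → Q * Q⁻¹ = g → g * g = g →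
      P * Q * Q = Q * P → Q = g := by
    intro P Q g hP hQ hg h
    have h2 : (P * Q * Q) * (P⁻¹ * Q⁻¹) = (Q * P) * (P⁻¹ * Q⁻¹) := by rw [h]
    have hL : (P * Q * Q) * (P⁻¹ * Q⁻¹) = Q := by
      trans ((P * P⁻¹) * ((Q * Q⁻¹) * Q))
      · ac_rfl
      rw [hP, hQ, ← mul_assoc, hg, hAcomm]
      exact habs _ _ _ hQ hg
    have hR : (Q * P) * (P⁻¹ * Q⁻¹) = g := by
      trans ((P * P⁻¹) * (Q * Q⁻¹))
      · ac_rfl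
      rw [hP, hQ, hg]
    rw [hL, hR] at h2
    exact h2
  have hstar3 : ∀ e : T, e * e = e → ∀ s : T, e * s = s → c e s (s⁻¹ * s) = θ (r s) := by
    intro e hee s hes
    have hsρ : s * (s⁻¹ * s) = s := by rw [← mul_assoc, InverseSemigroup.mul_inv_mul]
    have hρρ : (s⁻¹ * s) * (s⁻¹ * s) = s⁻¹ * s := is_l_idem s
    have h := hcoc e s (s⁻¹ * s) (s⁻¹ * s)
    rw [hsρ, hρρ, hes] at h
    have hsupp1 : c s (s⁻¹ * s) (s⁻¹ * s) * (c s (s⁻¹ * s) (s⁻¹ * s))⁻¹ = θ (r s) := by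
      rw [hc, show s * (s⁻¹ * s) * (s⁻¹ * s) = s from by rw [hsρ, hsρ]]
    have hsupp2 : c e s (s⁻¹ * s) * (c e s (s⁻¹ * s))⁻¹ = θ (r s) := by
      rw [hc, show e * s * (s⁻¹ * s) = s from by rw [hes, hsρ]]
    have hηabs : η e (c s (s⁻¹ * s) (s⁻¹ * s)) = c s (s⁻¹ * s) (s⁻¹ * s) := by
      rw [hη1 _ hee, hAcomm]
      exact habs _ _ _ hsupp1 (hθre e s hee hes)
    rw [hηabs] at h
    exact hPQ _ _ _ hsupp1 hsupp2 (hθr_sq s) h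
  have hstar5 : ∀ e : T, e * e = e → ∀ v : T, v * e = v → c (v * v⁻¹) v e = θ (r v) := by
    intro e hee v hve
    have h := hcoc (v * v⁻¹) v e e
    rw [hve, hee, InverseSemigroup.mul_inv_mul] at h
    have hsupp1 : c v e e * (c v e e)⁻¹ = θ (r v) := by
      rw [hc, show v * e * e = v from by rw [hve, hve]]
    have hsupp2 : c (v * v⁻¹) v e * (c (v * v⁻¹) v e)⁻¹ = θ (r v) := by
      rw [hc, show v * v⁻¹ * v * e = v from by rw [InverseSemigroup.mul_inv_mul, hve]]
    have hηabs : η (v * v⁻¹) (c v e e) = c v e e := by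
      rw [hη1 _ (is_r_idem v), show (θ (v * v⁻¹) : A) = θ (r v) from rfl, hAcomm]
      exact habs _ _ _ hsupp1 (hθr_sq v)
    rw [hηabs] at h
    exact hPQ _ _ _ hsupp1 hsupp2 (hθr_sq v) h
  have hPQ2 : ∀ Q R W g : A, Q * Q⁻¹ = g → W * W⁻¹ = g → g * g = g →
      Q * R * Q = W * Q → Q * R = W := by
    intro Q R W g hQ hW hg h
    have h2 : (Q * R * Q) * Q⁻¹ = (W * Q) * Q⁻¹ := by rw [h]
    have hL : (Q * R * Q) * Q⁻¹ = Q * R := by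
      trans ((Q * Q⁻¹ * Q) * R)
      · ac_rfl
      rw [InverseSemigroup.mul_inv_mul]
    have hR : (W * Q) * Q⁻¹ = W := by
      rw [mul_assoc, hQ]
      exact habs _ _ _ hW hg
    rw [hL, hR] at h2
    exact h2
  have hstar1 : ∀ e : T, e * e = e → ∀ u y : T, e * u = u →
      c e u y * c e e u = c e e (u * y) := by
    intro e hee u y heu
    have h := hcoc e e u y
    rw [heu, hee] at h
    have hsuppQ : c e u y * (c e u y)⁻¹ = θ (r (u * y)) := by
      rw [hc, heu]
    have hsuppW : c e e (u * y) * (c e e (u * y))⁻¹ = θ (r (u * y)) := by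
      rw [hc, show e * e * (u * y) = u * y from by rw [hee, ← mul_assoc, heu]]
    have hηabs : η e (c e u y) = c e u y := by
      rw [hη1 _ hee, hAcomm]
      exact habs _ _ _ hsuppQ (hθre e (u * y) hee (by rw [← mul_assoc, heu]))
    rw [hηabs] at h
    exact hPQ2 _ _ _ _ hsuppQ hsuppW (hθr_sq (u * y)) h
  have hstar4 : ∀ e : T, e * e = e → ∀ v w : T, v * e = v → e * w = w →
      c v e w = η v (c e e w) * c v e e := by
    intro e hee v w hve hew
    have h := hcoc v e e w
    rw [hee, hew, hve] at h
    have hsuppQ : c v e w * (c v e w)⁻¹ = θ (r (v * w)) := by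
      rw [hc, show v * e * w = v * w from by rw [hve]]
    have hsuppN : η v (c e e w) * (η v (c e e w))⁻¹ = θ (r (v * w)) := by
      rw [hsupη, hc, show e * e * w = w from by rw [hee, hew], hηθr]
    have h2 : (η v (c e e w) * c v e e * c v e w) * (c v e w)⁻¹
        = (c v e w * c v e w) * (c v e w)⁻¹ := by rw [h]
    have hL : (η v (c e e w) * c v e e * c v e w) * (c v e w)⁻¹
        = η v (c e e w) * c v e e := by
      trans ((η v (c e e w) * (c v e w * (c v e w)⁻¹)) * c v e e)
      · ac_rfl
      rw [hsuppQ, habs _ _ _ hsuppN (hθr_sq (v * w))]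
    have hR : (c v e w * c v e w) * (c v e w)⁻¹ = c v e w := by
      rw [mul_assoc, hsuppQ]
      exact habs _ _ _ hsuppQ (hθr_sq (v * w))
    rw [hL, hR] at h2
    exact h2.symm
  have hdiamond : ∀ e : T, e * e = e → ∀ x u : T, u * e = u →
      η x (c u e e) * c x u e = c (x * u) e e := by
    intro e hee x u hue
    have h := hcoc x u e e
    rw [hue, hee] at h
    have hsuppQ : c x u e * (c x u e)⁻¹ = θ (r (x * u)) := by
      rw [hc, show x * u * e = x * u from by rw [mul_assoc, hue]]
    have hsuppW : c (x * u) e e * (c (x * u) e e)⁻¹ = θ (r (x * u)) := by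
      rw [hc, show x * u * e * e = x * u from by rw [mul_assoc, hee, mul_assoc, hue]]
    have h2 : (η x (c u e e) * c x u e * c x u e) * (c x u e)⁻¹
        = (c x u e * c (x * u) e e) * (c x u e)⁻¹ := by rw [h]
    have hL : (η x (c u e e) * c x u e * c x u e) * (c x u e)⁻¹
        = η x (c u e e) * c x u e := by
      trans (η x (c u e e) * (c x u e * (c x u e * (c x u e)⁻¹)))
      · ac_rfl
      rw [hsuppQ, habs _ _ _ hsuppQ (hθr_sq (x * u))]
    have hR : (c x u e * c (x * u) e e) * (c x u e)⁻¹ = c (x * u) e e := by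
      trans (c (x * u) e e * (c x u e * (c x u e)⁻¹))
      · ac_rfl
      rw [hsuppQ]
      exact habs _ _ _ hsuppW (hθr_sq (x * u))
    rw [hL, hR] at h2
    exact h2
  have hnorm : ∀ x y : T, ∀ e ∈ E T,
      c' e (e * x) y = θ (r (e * x * y)) ∧
      c' (x * e) e (e * y) = θ (r (x * e * y)) ∧
      c' x (y * e) e = θ (r (x * y * e)) := by
    intro x y e he
    have hee : e * e = e := he
    have hei : e⁻¹ = e := is_idem_inv hee
    have heei : e * e⁻¹ = e := by rw [hei, hee]
    have heie : e⁻¹ * e = e := by rw [hei, hee]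
    -- d e s = (c e e s)⁻¹ whenever e * s = s
    have hdeu : ∀ s : T, e * s = s → d e s = (c e e s)⁻¹ := by
      intro s hes
      rw [hd, heei, hstar3 e hee s hes]
      exact habs _ _ _
        (by rw [hsupp_inv, hc, show e * e * s = s from by rw [hee, hes]]) (hθr_sq s)
    -- d v e = c v e e whenever v * e = v
    have hdve : ∀ v : T, v * e = v → d v e = c v e e := by
      intro v hve
      rw [hd, hstar5 e hee v hve, heie, is_idem_inv (hθr_sq v), hAcomm]
      exact habs _ _ _
        (by rw [hc, show v * e * e = v from by rw [hve, hve]]) (hθr_sq v)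
    refine ⟨?_, ?_, ?_⟩
    · -- c' e (e*x) y = θ (r (e*x*y))
      have heu0 : e * (e * x) = e * x := by rw [← mul_assoc, hee]
      rw [hc'def, heu0]
      obtain ⟨u, hgu⟩ : ∃ u, e * x = u := ⟨_, rfl⟩
      rw [hgu]
      have heu : e * u = u := by rw [← hgu, ← mul_assoc, hee]
      have p1 : η e (d u y) * (d u y)⁻¹ = θ (r (u * y)) := by
        rw [hη1 _ hee, mul_assoc, hsupd, hAcomm]
        exact hθre e (u * y) hee (by rw [← mul_assoc, heu])
      have p2 : d e (u * y) = (c e e (u * y))⁻¹ := hdeu (u * y) (by rw [← mul_assoc, heu])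
      rw [p1, p2, hdeu u heu, is_inv_inv]
      trans ((c e u y * c e e u) * ((c e e (u * y))⁻¹ * θ (r (u * y))))
      · ac_rfl
      rw [hstar1 e hee u y heu, ← mul_assoc, hc,
        show e * e * (u * y) = u * y from by rw [hee, ← mul_assoc, heu], hθr_sq]
    · -- c' (x*e) e (e*y) = θ (r (x*e*y))
      have hv0 : (x * e) * e = x * e := by rw [mul_assoc, hee]
      have hw0 : e * (e * y) = e * y := by rw [← mul_assoc, hee]
      rw [hc'def, hv0, hw0]
      obtain ⟨v, hgv⟩ : ∃ v, x * e = v := ⟨_, rfl⟩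
      obtain ⟨w, hgw⟩ : ∃ w, e * y = w := ⟨_, rfl⟩
      rw [hgv, hgw]
      have hv : v * e = v := by rw [← hgv, mul_assoc, hee]
      have hw : e * w = w := by rw [← hgw, ← mul_assoc, hee]
      have hvy : v * w = v * y := by rw [← hgw, ← mul_assoc, hv]
      rw [hdeu w hw, hηinv, hdve v hv, hstar4 e hee v w hv hw]
      trans ((η v (c e e w) * (η v (c e e w))⁻¹) *
        ((c v e e * (c v e e)⁻¹) * (d v w * (d v w)⁻¹)))
      · ac_rfl
      rw [hsupd, hsupη, hc, show e * e * w = w from by rw [hee, hw], hηθr, hc,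
        show v * e * e = v from by rw [hv, hv], hvy]
      trans (θ (r (v * y)) * θ (r (v * y)) * θ (r v))
      · ac_rfl
      rw [hθr_sq, hθrr]
    · -- c' x (y*e) e = θ (r (x*y*e))
      have hu0 : (y * e) * e = y * e := by rw [mul_assoc, hee]
      rw [hc'def, hu0]
      obtain ⟨u, hgu⟩ : ∃ u, y * e = u := ⟨_, rfl⟩
      rw [hgu]
      have hu : u * e = u := by rw [← hgu, mul_assoc, hee]
      have hxu : x * u = x * y * e := by rw [← hgu, ← mul_assoc]
      rw [hdve u hu, hdve (x * u) (by rw [mul_assoc, hu])]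
      trans ((η x (c u e e) * c x u e) * ((c (x * u) e e)⁻¹ * (d x u * (d x u)⁻¹)))
      · ac_rfl
      rw [hdiamond e hee x u hu, hsupd, ← mul_assoc, hc,
        show x * u * e * e = x * u from by rw [mul_assoc, hee, mul_assoc, hu],
        hθr_sq, hxu]
  exact ⟨hsupd, hdmono, hsupc', hc'coc, hc'mono, hnorm⟩
end
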